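/- Define H(x) = Σ_{n≥0} a_n x^n ∈ ℚ[[x]] with a_n = Σ_{k=0}^n C(n,k)^2 C(2k,k). Then (1/(1-3x)) · H((x^2+x)/(3x-1)) = H(x^2) as an identity of formal power series (i.e., after expanding the composition, noting (x^2+x)/(3x-1) = -x·(1+x)·(1-3x)^{-1} has zero constant term). -/

import Mathlib

open PowerSeries Finset

/-- The coefficients `a n = Σ_{k=0}^n C(n,k)² C(2k,k)`. -/
def aSeq (n : ℕ) : ℕ :=
  ∑ k ∈ Finset.range (n + 1), (Nat.choose n k) ^ 2 * Nat.choose (2 * k) k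

/-- The generating series `H = Σ a_n x^n ∈ ℚ⟦x⟧`. -/
noncomputable def Hq : PowerSeries ℚ := PowerSeries.mk fun n => (aSeq n : ℚ)

/-- Composition `Σ_n c_n u^n` of a coefficient sequence `c` with a power series `u`
having zero constant term: the `n`-th coefficient only involves `u^k` for `k ≤ n`. -/
noncomputable def seriesComp (c : ℕ → ℚ) (u : PowerSeries ℚ) : PowerSeries ℚ :=
  PowerSeries.mk fun n =>
    PowerSeries.coeff (R := ℚ) n (∑ k ∈ Finset.range (n + 1), PowerSeries.C (R := ℚ) (c k) * u ^ k)

/-- The power series `(x²+x)/(3x-1)`, expanded in `ℚ⟦x⟧`; it has zero constant term. -/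
noncomputable def uSeries : PowerSeries ℚ :=
  (PowerSeries.X ^ 2 + PowerSeries.X) * (3 * PowerSeries.X - 1)⁻¹

namespace HFE

/-- `a n` as a rational number. -/
noncomputable def aq (n : ℕ) : ℚ := (aSeq n : ℚ)

lemma choose_ratio (m k : ℕ) :
    ((m : ℚ) + 1) * (Nat.choose m k : ℚ) = ((m : ℚ) + 1 - k) * (Nat.choose (m+1) k : ℚ) := by
  have h : (m + 1) * Nat.choose m k = Nat.choose (m+1) k * ((m+1) - k) := by
    rw [Nat.add_one_mul_choose_eq, Nat.choose_succ_right_eq]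
  rcases le_or_gt k (m+1) with hk | hk
  · have h2 := congrArg (Nat.cast : ℕ → ℚ) h
    push_cast [Nat.cast_sub hk] at h2
    linarith [h2]
  · rw [Nat.choose_eq_zero_of_lt (by omega), Nat.choose_eq_zero_of_lt (by omega)]
    ring

lemma choose_succ_ratio (m k : ℕ) :
    ((k : ℚ) + 1) * (Nat.choose m (k+1) : ℚ) = ((m : ℚ) - k) * (Nat.choose m k : ℚ) := by
  have h : Nat.choose m (k+1) * (k+1) = Nat.choose m k * (m - k) := Nat.choose_succ_right_eq m k
  rcases le_or_gt k m with hk | hk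
  · have h2 := congrArg (Nat.cast : ℕ → ℚ) h
    push_cast [Nat.cast_sub hk] at h2
    linarith [h2]
  · rw [Nat.choose_eq_zero_of_lt (by omega), Nat.choose_eq_zero_of_lt (by omega)]
    ring

lemma central_ratio (k : ℕ) :
    ((k : ℚ) + 1) * (Nat.choose (2*(k+1)) (k+1) : ℚ) = 2 * (2*(k:ℚ)+1) * (Nat.choose (2*k) k : ℚ) := by
  have h1 : (2*k+2) * Nat.choose (2*k+1) k = Nat.choose (2*k+2) (k+1) * (k+1) :=
    Nat.add_one_mul_choose_eq (2*k+1) k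
  have h2 : (2*k+1) * Nat.choose (2*k) k = Nat.choose (2*k+1) (k+1) * (k+1) :=
    Nat.add_one_mul_choose_eq (2*k) k
  have h3 : Nat.choose (2*k+1) k = Nat.choose (2*k+1) (k+1) := by
    have := Nat.choose_symm (show k+1 ≤ 2*k+1 by omega)
    rwa [show 2*k+1 - (k+1) = k by omega] at this
  have key : (k+1) * Nat.choose (2*(k+1)) (k+1) = 2*(2*k+1) * Nat.choose (2*k) k := by
    have h4 : (k+1) * ((k+1) * Nat.choose (2*(k+1)) (k+1))
        = (k+1) * (2*(2*k+1) * Nat.choose (2*k) k) := by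
      rw [show 2*(k+1) = 2*k+2 by ring]
      calc (k+1) * ((k+1) * Nat.choose (2*k+2) (k+1))
          = (k+1) * (Nat.choose (2*k+2) (k+1) * (k+1)) := by ring
        _ = (k+1) * ((2*k+2) * Nat.choose (2*k+1) k) := by rw [h1]
        _ = (2*k+2) * ((k+1) * Nat.choose (2*k+1) (k+1)) := by rw [h3]; ring
        _ = (2*k+2) * (Nat.choose (2*k+1) (k+1) * (k+1)) := by ring
        _ = (2*k+2) * ((2*k+1) * Nat.choose (2*k) k) := by rw [h2]
        _ = (k+1) * (2*(2*k+1) * Nat.choose (2*k) k) := by ring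
    exact Nat.eq_of_mul_eq_mul_left (Nat.succ_pos k) h4
  have h5 := congrArg (Nat.cast : ℕ → ℚ) key
  push_cast at h5
  linarith [h5]

/-- The telescoping certificate function. -/
noncomputable def gq (n k : ℕ) : ℚ :=
  (k : ℚ)^3 * (Nat.choose (2*k) k : ℚ) * (Nat.choose (n+2) k : ℚ)^2 * (3*(k:ℚ) - 4*(n:ℚ) - 8)

lemma wz_step (n k : ℕ) :
    ((n:ℚ)+2)^2 * ( ((n:ℚ)+2)^2 * (Nat.choose (n+2) k : ℚ)^2 * (Nat.choose (2*k) k : ℚ)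
      - (10*((n:ℚ)+1)^2 + 10*((n:ℚ)+1) + 3) * (Nat.choose (n+1) k : ℚ)^2 * (Nat.choose (2*k) k : ℚ)
      + 9*((n:ℚ)+1)^2 * (Nat.choose n k : ℚ)^2 * (Nat.choose (2*k) k : ℚ) )
    = gq n (k+1) - gq n k := by
  have hn1 : ((n:ℚ)+1) ≠ 0 := by positivity
  have hn2 : ((n:ℚ)+2) ≠ 0 := by positivity
  have hk1 : ((k:ℚ)+1) ≠ 0 := by positivity
  have e1 : (Nat.choose (n+1) k : ℚ) = ((n:ℚ)+2-k) * (Nat.choose (n+2) k : ℚ) / ((n:ℚ)+2) := by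
    rw [eq_div_iff hn2]
    have := choose_ratio (n+1) k
    push_cast at this
    linarith [this]
  have e0 : (Nat.choose n k : ℚ) = ((n:ℚ)+1-k) * (Nat.choose (n+1) k : ℚ) / ((n:ℚ)+1) := by
    rw [eq_div_iff hn1]
    have := choose_ratio n k
    linarith [this]
  have e2 : (Nat.choose (n+2) (k+1) : ℚ) = ((n:ℚ)+2-k) * (Nat.choose (n+2) k : ℚ) / ((k:ℚ)+1) := by
    rw [eq_div_iff hk1]
    have := choose_succ_ratio (n+2) k
    push_cast at this
    linarith [this]
  have e4 : (Nat.choose (2*(k+1)) (k+1) : ℚ) = 2 * (2*(k:ℚ)+1) * (Nat.choose (2*k) k : ℚ) / ((k:ℚ)+1) := by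
    rw [eq_div_iff hk1]
    have := central_ratio k
    linarith [this]
  rw [gq, gq, e4, e2, e0, e1]
  push_cast
  field_simp
  ring

lemma aq_cast (m : ℕ) : aq m = ∑ k ∈ Finset.range (m + 1), (Nat.choose m k : ℚ)^2 * (Nat.choose (2*k) k : ℚ) := by
  rw [aq, aSeq]
  push_cast
  rfl

lemma arec (n : ℕ) :
    ((n:ℚ)+2)^2 * aq (n+2)
      = (10*((n:ℚ)+1)^2 + 10*((n:ℚ)+1) + 3) * aq (n+1) - 9*((n:ℚ)+1)^2 * aq n := by
  have hext : ∀ m, m ≤ n+2 → aq m = ∑ k ∈ Finset.range (n+3),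
      (Nat.choose m k : ℚ)^2 * (Nat.choose (2*k) k : ℚ) := by
    intro m hm
    rw [aq_cast]
    apply Finset.sum_subset (Finset.range_subset_range.2 (by omega))
    intro k hk1 hk2
    simp only [Finset.mem_range] at hk1 hk2
    rw [Nat.choose_eq_zero_of_lt (by omega)]
    norm_num
  have tele : ∑ k ∈ Finset.range (n+3), (gq n (k+1) - gq n k) = 0 := by
    rw [Finset.sum_range_sub (gq n)]
    have h1 : gq n (n+3) = 0 := by
      rw [gq, Nat.choose_eq_zero_of_lt (show n+2 < n+3 by omega)]
      norm_num
    have h2 : gq n 0 = 0 := by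
      rw [gq]
      norm_num
    rw [h1, h2, sub_zero]
  have key : ((n:ℚ)+2)^2 * ( ((n:ℚ)+2)^2 * aq (n+2)
      - (10*((n:ℚ)+1)^2 + 10*((n:ℚ)+1) + 3) * aq (n+1)
      + 9*((n:ℚ)+1)^2 * aq n ) = 0 := by
    calc ((n:ℚ)+2)^2 * ( ((n:ℚ)+2)^2 * aq (n+2)
          - (10*((n:ℚ)+1)^2 + 10*((n:ℚ)+1) + 3) * aq (n+1)
          + 9*((n:ℚ)+1)^2 * aq n )
        = ∑ k ∈ Finset.range (n+3),
            ((n:ℚ)+2)^2 * ( ((n:ℚ)+2)^2 * (Nat.choose (n+2) k : ℚ)^2 * (Nat.choose (2*k) k : ℚ)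
            - (10*((n:ℚ)+1)^2 + 10*((n:ℚ)+1) + 3) * (Nat.choose (n+1) k : ℚ)^2 * (Nat.choose (2*k) k : ℚ)
            + 9*((n:ℚ)+1)^2 * (Nat.choose n k : ℚ)^2 * (Nat.choose (2*k) k : ℚ) ) := by
          rw [hext (n+2) (by omega), hext (n+1) (by omega), hext n (by omega)]
          simp only [mul_sub, mul_add, Finset.mul_sum, ← Finset.sum_sub_distrib,
            ← Finset.sum_add_distrib]
          exact Finset.sum_congr rfl (fun k _ => by ring)
      _ = ∑ k ∈ Finset.range (n+3), (gq n (k+1) - gq n k) :=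
          Finset.sum_congr rfl (fun k _ => wz_step n k)
      _ = 0 := tele
  have h2 : (((n:ℚ)+2)^2) ≠ 0 := by positivity
  rcases mul_eq_zero.mp key with h | h
  · exact absurd h h2
  · linarith [h]



/-- the inverse of `3X - 1`. -/
noncomputable def v : PowerSeries ℚ := (3 * PowerSeries.X - 1)⁻¹

lemma hv : (3 * X - 1 : ℚ⟦X⟧) * v = 1 := by
  apply PowerSeries.mul_inv_cancel
  simp

lemma uSeries_eq : uSeries = (X ^ 2 + X) * v := rfl

lemma coeff_X_pow_mul_of_lt (y : ℚ⟦X⟧) {m k : ℕ} (h : m < k) :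
    coeff m ((X : ℚ⟦X⟧) ^ k * y) = 0 := by
  rw [coeff_mul]
  apply Finset.sum_eq_zero
  intro p hp
  rw [Finset.HasAntidiagonal.mem_antidiagonal] at hp
  rw [coeff_X_pow, if_neg (by omega)]
  ring

lemma coeff_u_pow_of_lt {m k : ℕ} (h : m < k) : coeff m (uSeries ^ k) = 0 := by
  have : uSeries ^ k = X ^ k * ((X + 1) * v) ^ k := by
    rw [uSeries_eq, ← mul_pow]
    ring_nf
  rw [this]
  exact coeff_X_pow_mul_of_lt _ h

lemma comp_coeff_stable (c : ℕ → ℚ) {N m : ℕ} (h : m ≤ N) :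
    coeff m (seriesComp c uSeries)
      = coeff m (∑ k ∈ Finset.range (N+1), C (c k) * uSeries ^ k) := by
  rw [seriesComp, coeff_mk]
  rw [map_sum, map_sum]
  apply Finset.sum_subset (Finset.range_subset_range.2 (by omega))
  intro k hk1 hk2
  simp only [Finset.mem_range] at hk1 hk2
  rw [coeff_C_mul, coeff_u_pow_of_lt (by omega)]
  ring

lemma mul_comp_coeff (w : ℚ⟦X⟧) (c : ℕ → ℚ) {N m : ℕ} (h : m ≤ N) :
    coeff m (w * seriesComp c uSeries)
      = coeff m (w * ∑ k ∈ Finset.range (N+1), C (c k) * uSeries ^ k) := by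
  rw [coeff_mul, coeff_mul]
  apply Finset.sum_congr rfl
  intro p hp
  rw [Finset.HasAntidiagonal.mem_antidiagonal] at hp
  rw [comp_coeff_stable c (show p.2 ≤ N by omega)]

lemma comp_add (b c : ℕ → ℚ) :
    seriesComp (fun k => b k + c k) uSeries
      = seriesComp b uSeries + seriesComp c uSeries := by
  ext m
  simp only [seriesComp, coeff_mk, map_add, map_sum]
  rw [← Finset.sum_add_distrib]
  apply Finset.sum_congr rfl
  intro k _
  rw [← map_add, map_add (C (R := ℚ)), add_mul, map_add]

lemma comp_smul (q : ℚ) (c : ℕ → ℚ) :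
    seriesComp (fun k => q * c k) uSeries = C q * seriesComp c uSeries := by
  ext m
  rw [coeff_C_mul]
  simp only [seriesComp, coeff_mk, map_sum, Finset.mul_sum]
  apply Finset.sum_congr rfl
  intro k _
  rw [map_mul (C (R := ℚ)), mul_assoc, coeff_C_mul]

/-- shifted coefficient sequence -/
def sh (s : ℕ) (c : ℕ → ℚ) (j : ℕ) : ℚ := if s ≤ j then c (j - s) else 0

lemma comp_shift (s : ℕ) (c : ℕ → ℚ) :
    uSeries ^ s * seriesComp c uSeries = seriesComp (sh s c) uSeries := by
  ext m
  rw [mul_comp_coeff _ c (le_refl m)]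
  have h1 : (uSeries ^ s) * ∑ k ∈ Finset.range (m+1), C (c k) * uSeries ^ k
      = ∑ k ∈ Finset.range (m+1), C (c k) * uSeries ^ (s + k) := by
    rw [Finset.mul_sum]
    apply Finset.sum_congr rfl
    intro k _
    rw [pow_add]
    ring
  rw [h1, comp_coeff_stable (sh s c) (show m ≤ m + s by omega)]
  have h4 : ∑ k ∈ Finset.range (s + (m+1)), C (sh s c k) * uSeries ^ k
      = ∑ k ∈ Finset.range (m+1), C (c k) * uSeries ^ (s + k) := by
    rw [Finset.sum_range_add]
    have h3 : ∑ j ∈ Finset.range s, C (sh s c j) * uSeries ^ j = 0 := by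
      apply Finset.sum_eq_zero
      intro j hj
      simp only [Finset.mem_range] at hj
      rw [sh, if_neg (by omega), map_zero, zero_mul]
    rw [h3, zero_add]
    apply Finset.sum_congr rfl
    intro i _
    rw [sh, if_pos (by omega), show s + i - s = i by omega]
  rw [show m + s + 1 = s + (m+1) by omega, h4]


lemma comp_zero : seriesComp (fun _ => 0) uSeries = 0 := by
  ext m
  simp [seriesComp]

lemma d_comp (c : ℕ → ℚ) :
    d⁄dX ℚ (seriesComp c uSeries)
      = d⁄dX ℚ uSeries * seriesComp (fun k => ((k:ℚ)+1) * c (k+1)) uSeries := by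
  ext m
  rw [coeff_derivative, seriesComp, coeff_mk,
    mul_comp_coeff _ _ (le_refl m)]
  have hD : coeff (m+1) (∑ k ∈ Finset.range (m+1+1), C (c k) * uSeries ^ k) * ((m:ℚ)+1)
      = coeff m (d⁄dX ℚ (∑ k ∈ Finset.range (m+1+1), C (c k) * uSeries ^ k)) := by
    rw [coeff_derivative]
  rw [hD]
  have hsum : d⁄dX ℚ (∑ k ∈ Finset.range (m+1+1), C (c k) * uSeries ^ k)
      = d⁄dX ℚ uSeries * ∑ k ∈ Finset.range (m+1), C (((k:ℚ)+1) * c (k+1)) * uSeries ^ k := by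
    rw [map_sum]
    have hterm : ∀ k, d⁄dX ℚ (C (c k) * uSeries ^ k)
        = C (c k) * (k • (uSeries ^ (k-1) * d⁄dX ℚ uSeries)) := by
      intro k
      rw [Derivation.leibniz, Derivation.leibniz_pow, derivative_C]
      simp only [smul_eq_mul, smul_zero, add_zero]
      ring_nf
    rw [Finset.sum_congr rfl (fun k _ => hterm k), Finset.sum_range_succ']
    have h0 : C (c 0) * ((0:ℕ) • (uSeries ^ (0-1) * d⁄dX ℚ uSeries)) = 0 := by
      simp
    rw [h0, add_zero, Finset.mul_sum]
    apply Finset.sum_congr rfl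
    intro k _
    have hns : (k+1) • (uSeries ^ k * d⁄dX ℚ uSeries)
        = C ((k:ℚ)+1) * (uSeries ^ k * d⁄dX ℚ uSeries) := by
      rw [nsmul_eq_mul]
      congr 1
      rw [← map_natCast (C (R := ℚ)) (k+1)]
      push_cast
      rfl
    rw [show k + 1 - 1 = k by omega, hns, map_mul]
    ring
  rw [hsum]

lemma h3X : d⁄dX ℚ (3*X - 1 : ℚ⟦X⟧) = 3 := by
  have : (3*X - 1 : ℚ⟦X⟧) = C 3 * X - C 1 := by
    simp [map_ofNat]
  rw [this, map_sub, Derivation.leibniz, derivative_C, derivative_X]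
  simp [map_ofNat]

lemma hdv : d⁄dX ℚ v = -3 * v^2 := by
  rw [v, PowerSeries.derivative_inv', h3X]
  ring

lemma hdu : d⁄dX ℚ uSeries = (2*X+1)*v - 3*(X^2+X)*v^2 := by
  rw [uSeries_eq, Derivation.leibniz, hdv]
  have h2 : d⁄dX ℚ ((X:ℚ⟦X⟧)^2 + X) = 2*X + 1 := by
    rw [map_add, Derivation.leibniz_pow, derivative_X]
    simp [smul_eq_mul]
  rw [h2]
  simp only [smul_eq_mul]
  ring

lemma hC (q : ℚ) (w : ℚ⟦X⟧) : d⁄dX ℚ (C q * w) = C q * d⁄dX ℚ w := by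
  rw [Derivation.leibniz, derivative_C]
  simp [smul_eq_mul]

lemma hddu : d⁄dX ℚ ((2*X+1)*v - 3*(X^2+X)*v^2 : ℚ⟦X⟧)
    = 2*v - 6*(2*X+1)*v^2 + 18*(X^2+X)*v^3 := by
  have h1 : d⁄dX ℚ ((2*X+1 : ℚ⟦X⟧)) = 2 := by
    have e : (2*X + 1 : ℚ⟦X⟧) = C 2 * X + C 1 := by simp [map_ofNat]
    rw [e, map_add, Derivation.leibniz, derivative_C, derivative_X]
    simp [map_ofNat]
  have h2 : d⁄dX ℚ ((X:ℚ⟦X⟧)^2 + X) = 2*X + 1 := by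
    rw [map_add, Derivation.leibniz_pow, derivative_X]
    simp [smul_eq_mul]
  have h3 : d⁄dX ℚ ((X^2+X)*v^2 : ℚ⟦X⟧) = (X^2+X)*(2*v*(-3*v^2)) + v^2*(2*X+1) := by
    rw [Derivation.leibniz, h2, Derivation.leibniz_pow, hdv]
    simp only [smul_eq_mul]
    ring
  have e : ((2*X+1)*v - 3*(X^2+X)*v^2 : ℚ⟦X⟧)
      = (2*X+1)*v - C 3 * ((X^2+X)*v^2) := by
    simp only [map_ofNat]
    ring
  rw [e, map_sub, hC, Derivation.leibniz, h3, h1, hdv]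
  simp only [smul_eq_mul, map_ofNat]
  ring

/-- first derived coefficient sequence -/
noncomputable def a1 (k : ℕ) : ℚ := ((k:ℚ)+1) * aq (k+1)
/-- second derived coefficient sequence -/
noncomputable def a2 (k : ℕ) : ℚ := ((k:ℚ)+1) * ((k:ℚ)+2) * aq (k+2)

noncomputable def F0 : ℚ⟦X⟧ := seriesComp aq uSeries
noncomputable def F1 : ℚ⟦X⟧ := seriesComp a1 uSeries
noncomputable def F2 : ℚ⟦X⟧ := seriesComp a2 uSeries

lemma hdF0 : d⁄dX ℚ F0 = d⁄dX ℚ uSeries * F1 := by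
  rw [F0, d_comp]
  rfl

lemma hdF1 : d⁄dX ℚ F1 = d⁄dX ℚ uSeries * F2 := by
  rw [F1, d_comp, F2]
  congr 1
  apply congrArg (seriesComp · uSeries)
  funext k
  rw [a1, a2]
  push_cast
  ring

lemma aq0 : aq 0 = 1 := by norm_num [aq, aSeq]
lemma aq1 : aq 1 = 3 := by
  have : aSeq 1 = 3 := by decide
  rw [aq, this]; norm_num
lemma aq2 : aq 2 = 15 := by
  have : aSeq 2 = 15 := by decide
  rw [aq, this]; norm_num
lemma aq3 : aq 3 = 93 := by
  have : aSeq 3 = 93 := by decide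
  rw [aq, this]
  norm_num

lemma beta_zero (j : ℕ) :
    9 * sh 2 aq j + (-3) * sh 1 aq j + 1 * sh 1 a1 j + (-20) * sh 2 a1 j
      + 27 * sh 3 a1 j + 1 * sh 2 a2 j + (-10) * sh 3 a2 j + 9 * sh 4 a2 j = 0 := by
  match j with
  | 0 => simp [sh]
  | 1 =>
    simp only [sh]
    norm_num [a1, aq0, aq1]
  | 2 =>
    simp only [sh]
    norm_num [a1, a2, aq0, aq1, aq2]
  | 3 =>
    simp only [sh]
    norm_num [a1, a2, aq1, aq2, aq3]
  | (m+4) =>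
    simp only [sh]
    rw [if_pos (show 2 ≤ m+4 by omega), if_pos (show 1 ≤ m+4 by omega),
      if_pos (show 1 ≤ m+4 by omega), if_pos (show 2 ≤ m+4 by omega),
      if_pos (show 3 ≤ m+4 by omega), if_pos (show 2 ≤ m+4 by omega),
      if_pos (show 3 ≤ m+4 by omega), if_pos (show 4 ≤ m+4 by omega)]
    rw [show m+4-2 = m+2 by omega, show m+4-1 = m+3 by omega,
      show m+4-3 = m+1 by omega, show m+4-4 = m by omega]
    simp only [a1, a2]
    have h := arec (m+2)
    push_cast at h ⊢
    linear_combination h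

lemma hZ : (9*uSeries^4 - 10*uSeries^3 + uSeries^2) * F2
    + (27*uSeries^3 - 20*uSeries^2 + uSeries) * F1
    + (9*uSeries^2 - 3*uSeries) * F0 = 0 := by
  have key : ∀ (s:ℕ) (q:ℚ) (c: ℕ→ℚ),
      C q * (uSeries^s * seriesComp c uSeries)
        = seriesComp (fun j => q * sh s c j) uSeries := by
    intro s q c
    rw [comp_shift, ← comp_smul]
  calc (9*uSeries^4 - 10*uSeries^3 + uSeries^2) * F2
      + (27*uSeries^3 - 20*uSeries^2 + uSeries) * F1
      + (9*uSeries^2 - 3*uSeries) * F0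
      = C 9 * (uSeries^2 * seriesComp aq uSeries)
        + C (-3) * (uSeries^1 * seriesComp aq uSeries)
        + C 1 * (uSeries^1 * seriesComp a1 uSeries)
        + C (-20) * (uSeries^2 * seriesComp a1 uSeries)
        + C 27 * (uSeries^3 * seriesComp a1 uSeries)
        + C 1 * (uSeries^2 * seriesComp a2 uSeries)
        + C (-10) * (uSeries^3 * seriesComp a2 uSeries)
        + C 9 * (uSeries^4 * seriesComp a2 uSeries) := by
        rw [F0, F1, F2]
        simp only [map_ofNat, map_neg, map_one]
        ring
    _ = seriesComp (fun j => 9 * sh 2 aq j) uSeries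
        + seriesComp (fun j => (-3) * sh 1 aq j) uSeries
        + seriesComp (fun j => 1 * sh 1 a1 j) uSeries
        + seriesComp (fun j => (-20) * sh 2 a1 j) uSeries
        + seriesComp (fun j => 27 * sh 3 a1 j) uSeries
        + seriesComp (fun j => 1 * sh 2 a2 j) uSeries
        + seriesComp (fun j => (-10) * sh 3 a2 j) uSeries
        + seriesComp (fun j => 9 * sh 4 a2 j) uSeries := by
        rw [key, key, key, key, key, key, key, key]
    _ = seriesComp (fun j => 9 * sh 2 aq j + (-3) * sh 1 aq j + 1 * sh 1 a1 j
          + (-20) * sh 2 a1 j + 27 * sh 3 a1 j + 1 * sh 2 a2 j + (-10) * sh 3 a2 j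
          + 9 * sh 4 a2 j) uSeries := by
        rw [← comp_add, ← comp_add, ← comp_add, ← comp_add, ← comp_add, ← comp_add, ← comp_add]
    _ = seriesComp (fun _ => 0) uSeries := by
        apply congrArg (seriesComp · uSeries)
        funext j
        exact beta_zero j
    _ = 0 := comp_zero

noncomputable def duE : ℚ⟦X⟧ := (2*X+1)*v - 3*(X^2+X)*v^2
noncomputable def dduE : ℚ⟦X⟧ := 2*v - 6*(2*X+1)*v^2 + 18*(X^2+X)*v^3
noncomputable def pT2 : ℚ⟦X⟧ := (X^2 - 10*X^4 + 9*X^6) * (1-3*X)^2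
noncomputable def pT1 : ℚ⟦X⟧ :=
  6*(X^2 - 10*X^4 + 9*X^6)*(1-3*X) + (X - 30*X^3 + 45*X^5)*(1-3*X)^2
noncomputable def pT0 : ℚ⟦X⟧ :=
  18*(X^2 - 10*X^4 + 9*X^6) + 3*(X - 30*X^3 + 45*X^5)*(1-3*X) + (-12*X^2 + 36*X^4)*(1-3*X)^2
noncomputable def hE : ℚ⟦X⟧ := -1 - 5*X - 2*X^2 + 14*X^3 + 3*X^4 - 9*X^5
noncomputable def WE : ℚ⟦X⟧ := (1-3*X) * ((X-1)^3 * ((3*X+1)^3 * (3*X-1)^2))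

lemma I1 : hE * pT2 * duE * duE = WE * (9*uSeries^4 - 10*uSeries^3 + uSeries^2) := by
  rw [hE, pT2, duE, WE, uSeries_eq]
  linear_combination ((4 : ℚ⟦X⟧) * X ^ 3 * v ^ 2 + (-120 : ℚ⟦X⟧) * X ^ 5 * v ^ 2 + (1308 : ℚ⟦X⟧) * X ^ 7 * v ^ 2 + (-6160 : ℚ⟦X⟧) * X ^ 9 * v ^ 2 + (11772 : ℚ⟦X⟧) * X ^ 11 * v ^ 2 + (-9720 : ℚ⟦X⟧) * X ^ 13 * v ^ 2 + (2916 : ℚ⟦X⟧) * X ^ 15 * v ^ 2) * hv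

lemma I2 : hE * (pT2 * dduE + pT1 * duE) = WE * (27*uSeries^3 - 20*uSeries^2 + uSeries) := by
  rw [hE, pT2, pT1, duE, dduE, WE, uSeries_eq]
  linear_combination ((11 : ℚ⟦X⟧) * X ^ 2 * v + (-2 : ℚ⟦X⟧) * X ^ 3 * v + (-9 : ℚ⟦X⟧) * X ^ 3 * v ^ 2 + (-277 : ℚ⟦X⟧) * X ^ 4 * v + (-27 : ℚ⟦X⟧) * X ^ 4 * v ^ 2 + (112 : ℚ⟦X⟧) * X ^ 5 * v + (189 : ℚ⟦X⟧) * X ^ 5 * v ^ 2 + (2438 : ℚ⟦X⟧) * X ^ 6 * v + (567 : ℚ⟦X⟧) * X ^ 6 * v ^ 2 + (-1676 : ℚ⟦X⟧) * X ^ 7 * v + (-1242 : ℚ⟦X⟧) * X ^ 7 * v ^ 2 + (-8706 : ℚ⟦X⟧) * X ^ 8 * v + (-3726 : ℚ⟦X⟧) * X ^ 8 * v ^ 2 + (8856 : ℚ⟦X⟧) * X ^ 9 * v + (2682 : ℚ⟦X⟧) * X ^ 9 * v ^ 2 + (11151 : ℚ⟦X⟧) * X ^ 10 * v + (8046 : ℚ⟦X⟧)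 * X ^ 10 * v ^ 2 + (-13122 : ℚ⟦X⟧) * X ^ 11 * v + (-2349 : ℚ⟦X⟧) * X ^ 11 * v ^ 2 + (-4617 : ℚ⟦X⟧) * X ^ 12 * v + (-7047 : ℚ⟦X⟧) * X ^ 12 * v ^ 2 + (5832 : ℚ⟦X⟧) * X ^ 13 * v + (729 : ℚ⟦X⟧) * X ^ 13 * v ^ 2 + (2187 : ℚ⟦X⟧) * X ^ 14 * v ^ 2) * hv

lemma I3 : hE * pT0 = WE * (9*uSeries^2 - 3*uSeries) := by
  rw [hE, pT0, WE, uSeries_eq]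
  linear_combination ((3 : ℚ⟦X⟧) * X + (12 : ℚ⟦X⟧) * X ^ 2 + (-9 : ℚ⟦X⟧) * X ^ 2 * v + (-27 : ℚ⟦X⟧) * X ^ 3 + (-18 : ℚ⟦X⟧) * X ^ 3 * v + (-120 : ℚ⟦X⟧) * X ^ 4 + (207 : ℚ⟦X⟧) * X ^ 4 * v + (6 : ℚ⟦X⟧) * X ^ 5 + (360 : ℚ⟦X⟧) * X ^ 5 * v + (-1602 : ℚ⟦X⟧) * X ^ 6 * v + (18 : ℚ⟦X⟧) * X ^ 7 + (-2124 : ℚ⟦X⟧) * X ^ 7 * v + (1080 : ℚ⟦X⟧) * X ^ 8 + (4806 : ℚ⟦X⟧) * X ^ 8 * v + (-729 : ℚ⟦X⟧) * X ^ 9 + (3240 : ℚ⟦X⟧) * X ^ 9 * v + (-972 : ℚ⟦X⟧) * X ^ 10 + (-5589 : ℚ⟦X⟧) * X ^ 10 * v + (729 : ℚ⟦X⟧) * X ^ 11 + (-1458 : ℚ⟦X⟧) * X ^ 11 * v + (2187 : ℚ⟦X⟧) * X ^ 12 * v) * hv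

lemma hdF0' : d⁄dX ℚ F0 = duE * F1 := by
  rw [hdF0, hdu, duE]

lemma hddF0 : d⁄dX ℚ (d⁄dX ℚ F0) = dduE * F1 + duE * (duE * F2) := by
  rw [hdF0', duE, Derivation.leibniz, hddu, hdF1, hdu]
  simp only [smul_eq_mul]
  rw [dduE]
  ring

lemma ode_F : pT2 * (d⁄dX ℚ (d⁄dX ℚ F0)) + pT1 * (d⁄dX ℚ F0) + pT0 * F0 = 0 := by
  have key : hE * (pT2 * (d⁄dX ℚ (d⁄dX ℚ F0)) + pT1 * (d⁄dX ℚ F0) + pT0 * F0) = 0 := by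
    rw [hddF0, hdF0']
    calc hE * (pT2 * (dduE * F1 + duE * (duE * F2)) + pT1 * (duE * F1) + pT0 * F0)
        = (hE * pT2 * duE * duE) * F2 + (hE * (pT2 * dduE + pT1 * duE)) * F1
          + (hE * pT0) * F0 := by ring
      _ = (WE * (9*uSeries^4 - 10*uSeries^3 + uSeries^2)) * F2
          + (WE * (27*uSeries^3 - 20*uSeries^2 + uSeries)) * F1
          + (WE * (9*uSeries^2 - 3*uSeries)) * F0 := by rw [I1, I2, I3]
      _ = WE * ((9*uSeries^4 - 10*uSeries^3 + uSeries^2) * F2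
          + (27*uSeries^3 - 20*uSeries^2 + uSeries) * F1
          + (9*uSeries^2 - 3*uSeries) * F0) := by ring
      _ = 0 := by rw [hZ, mul_zero]
  have hEne : hE ≠ 0 := by
    intro h
    have h2 : constantCoeff hE = -1 := by
      rw [hE]
      simp
    rw [h] at h2
    simp at h2
  rcases mul_eq_zero.mp key with h | h
  · exact absurd h hEne
  · exact h

/-- Coefficients of the right-hand side. -/
noncomputable def ee (m : ℕ) : ℚ := if 2 ∣ m then aq (m/2) else 0
noncomputable def Emk : ℚ⟦X⟧ := PowerSeries.mk ee
noncomputable def G : ℚ⟦X⟧ := (1 - 3*X) * Emk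

lemma coeffXpow (s m : ℕ) (y : ℚ⟦X⟧) :
    coeff m ((X:ℚ⟦X⟧)^s * y) = if s ≤ m then coeff (m-s) y else 0 := by
  rcases le_or_gt s m with h | h
  · rw [if_pos h]
    obtain ⟨d, rfl⟩ := Nat.exists_eq_add_of_le h
    rw [show s + d - s = d by omega, show s + d = d + s by omega, coeff_X_pow_mul]
  · rw [if_neg (by omega)]
    exact coeff_X_pow_mul_of_lt y h

lemma ode_E : (X^2 - 10*X^4 + 9*X^6) * (d⁄dX ℚ (d⁄dX ℚ Emk))
    + (X - 30*X^3 + 45*X^5) * (d⁄dX ℚ Emk) + (-12*X^2 + 36*X^4) * Emk = 0 := by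
  have hsplit : (X^2 - 10*X^4 + 9*X^6) * (d⁄dX ℚ (d⁄dX ℚ Emk))
      + (X - 30*X^3 + 45*X^5) * (d⁄dX ℚ Emk) + (-12*X^2 + 36*X^4) * Emk
      = X^2 * (d⁄dX ℚ (d⁄dX ℚ Emk)) + C (-10) * (X^4 * (d⁄dX ℚ (d⁄dX ℚ Emk)))
        + C 9 * (X^6 * (d⁄dX ℚ (d⁄dX ℚ Emk)))
        + X^1 * (d⁄dX ℚ Emk) + C (-30) * (X^3 * (d⁄dX ℚ Emk))
        + C 45 * (X^5 * (d⁄dX ℚ Emk))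
        + C (-12) * (X^2 * Emk) + C 36 * (X^4 * Emk) := by
    simp only [map_neg, map_ofNat]
    ring
  ext m
  rw [hsplit]
  have cdd : ∀ j, coeff j (d⁄dX ℚ (d⁄dX ℚ (PowerSeries.mk ee))) = ee (j+2) * ((j:ℚ)+2) * ((j:ℚ)+1) := by
    intro j
    rw [coeff_derivative, coeff_derivative, coeff_mk]
    push_cast
    ring
  have cd : ∀ j, coeff j (d⁄dX ℚ (PowerSeries.mk ee)) = ee (j+1) * ((j:ℚ)+1) := by
    intro j
    rw [coeff_derivative, coeff_mk]
  simp only [map_add, coeff_C_mul, coeffXpow, cdd, cd, Emk, coeff_mk, map_zero]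
  rcases Nat.lt_or_ge m 6 with hm | hm
  · interval_cases m <;>
      · norm_num [ee, aq0, aq1, aq2]
  · obtain ⟨k, rfl⟩ : ∃ k, m = k + 6 := ⟨m - 6, by omega⟩
    rw [if_pos (show 2 ≤ k+6 by omega), if_pos (show 4 ≤ k+6 by omega),
      if_pos (show 6 ≤ k+6 by omega), if_pos (show 1 ≤ k+6 by omega),
      if_pos (show 3 ≤ k+6 by omega), if_pos (show 5 ≤ k+6 by omega),
      if_pos (show 2 ≤ k+6 by omega), if_pos (show 4 ≤ k+6 by omega)]
    rw [show k+6-2 = k+4 by omega, show k+6-4 = k+2 by omega, show k+6-6 = k by omega,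
      show k+6-1 = k+5 by omega, show k+6-3 = k+3 by omega, show k+6-5 = k+1 by omega]
    rw [show k+4+2 = k+6 by omega, show k+2+2 = k+4 by omega, show k+5+1 = k+6 by omega,
      show k+3+1 = k+4 by omega, show k+1+1 = k+2 by omega]
    by_cases hpar : 2 ∣ k
    · obtain ⟨r, rfl⟩ := hpar
      have e6 : ee (2*r+6) = aq (r+3) := by
        rw [ee, if_pos (by omega), show (2*r+6)/2 = r+3 by omega]
      have e4 : ee (2*r+4) = aq (r+2) := by
        rw [ee, if_pos (by omega), show (2*r+4)/2 = r+2 by omega]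
      have e2 : ee (2*r+2) = aq (r+1) := by
        rw [ee, if_pos (by omega), show (2*r+2)/2 = r+1 by omega]
      rw [e6, e4, e2]
      have h := arec (r+1)
      push_cast at h ⊢
      linear_combination 4 * h
    · have e6 : ee (k+6) = 0 := by rw [ee, if_neg (by omega)]
      have e4 : ee (k+4) = 0 := by rw [ee, if_neg (by omega)]
      have e2 : ee (k+2) = 0 := by rw [ee, if_neg (by omega)]
      rw [e6, e4, e2]
      ring

lemma h13X : d⁄dX ℚ (1 - 3*X : ℚ⟦X⟧) = -3 := by
  have e : (1 - 3*X : ℚ⟦X⟧) = C 1 - C 3 * X := by simp [map_ofNat]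
  rw [e, map_sub, Derivation.leibniz, derivative_C, derivative_C, derivative_X]
  simp [map_ofNat]

lemma hdG : d⁄dX ℚ G = (1-3*X) * (d⁄dX ℚ Emk) - 3 * Emk := by
  rw [G, Derivation.leibniz, h13X]
  simp only [smul_eq_mul]
  ring

lemma hddG : d⁄dX ℚ (d⁄dX ℚ G) = (1-3*X) * (d⁄dX ℚ (d⁄dX ℚ Emk)) - 6 * (d⁄dX ℚ Emk) := by
  rw [hdG, map_sub, Derivation.leibniz, h13X]
  have e : d⁄dX ℚ (3 * Emk) = 3 * (d⁄dX ℚ Emk) := by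
    have e2 : (3 * Emk : ℚ⟦X⟧) = C 3 * Emk := by simp [map_ofNat]
    rw [e2, hC]
    simp [map_ofNat]
  rw [e]
  simp only [smul_eq_mul]
  ring

lemma ode_G : pT2 * (d⁄dX ℚ (d⁄dX ℚ G)) + pT1 * (d⁄dX ℚ G) + pT0 * G = 0 := by
  rw [hddG, hdG, G]
  calc pT2 * ((1-3*X) * (d⁄dX ℚ (d⁄dX ℚ Emk)) - 6 * (d⁄dX ℚ Emk))
      + pT1 * ((1-3*X) * (d⁄dX ℚ Emk) - 3 * Emk) + pT0 * ((1 - 3*X) * Emk)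
      = (1-3*X)^3 * ((X^2 - 10*X^4 + 9*X^6) * (d⁄dX ℚ (d⁄dX ℚ Emk))
        + (X - 30*X^3 + 45*X^5) * (d⁄dX ℚ Emk) + (-12*X^2 + 36*X^4) * Emk) := by
        rw [pT2, pT1, pT0]
        ring
    _ = 0 := by rw [ode_E, mul_zero]

noncomputable def A2p : ℚ⟦X⟧ := (1 - 10*X^2 + 9*X^4)*(1-3*X)^2
noncomputable def A1p : ℚ⟦X⟧ := 6*X*(1 - 10*X^2 + 9*X^4)*(1-3*X) + (1 - 30*X^2 + 45*X^4)*(1-3*X)^2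
noncomputable def A0p : ℚ⟦X⟧ :=
  18*X*(1 - 10*X^2 + 9*X^4) + 3*(1 - 30*X^2 + 45*X^4)*(1-3*X) + X*(-12 + 36*X^2)*(1-3*X)^2

lemma cA2 : coeff 0 A2p = 1 := by
  rw [coeff_zero_eq_constantCoeff, A2p]
  simp

lemma cA1 : coeff 0 A1p = 1 := by
  rw [coeff_zero_eq_constantCoeff, A1p]
  simp

lemma cA0 : coeff 0 A0p = 3 := by
  rw [coeff_zero_eq_constantCoeff, A0p]
  simp [map_ofNat]

lemma coeff_mul_single (A w : ℚ⟦X⟧) (m : ℕ) (hw : ∀ j, j < m → coeff j w = 0) :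
    coeff m (A * w) = coeff 0 A * coeff m w := by
  rw [coeff_mul]
  apply Finset.sum_eq_single_of_mem (0, m)
  · simp
  · intro b hb hbne
    rw [Finset.HasAntidiagonal.mem_antidiagonal] at hb
    have hb2 : b.2 < m := by
      rcases Nat.lt_or_ge b.2 m with h | h
      · exact h
      · exfalso
        apply hbne
        have h1 : b.2 = m := by omega
        have h2 : b.1 = 0 := by omega
        exact Prod.ext h2 h1
    rw [hw b.2 hb2, mul_zero]

lemma F0_eq_G : F0 = G := by
  have hδ : pT2 * (d⁄dX ℚ (d⁄dX ℚ (F0 - G))) + pT1 * (d⁄dX ℚ (F0 - G)) + pT0 * (F0 - G) = 0 := by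
    simp only [map_sub]
    linear_combination ode_F - ode_G
  have hsplit : pT2 * (d⁄dX ℚ (d⁄dX ℚ (F0 - G))) + pT1 * (d⁄dX ℚ (F0 - G)) + pT0 * (F0 - G)
      = X^2 * (A2p * (d⁄dX ℚ (d⁄dX ℚ (F0 - G)))) + X^1 * (A1p * (d⁄dX ℚ (F0 - G)))
        + X^1 * (A0p * (F0 - G)) := by
    rw [pT2, pT1, pT0, A2p, A1p, A0p]
    ring
  rw [hsplit] at hδ
  have hco : ∀ m, coeff m (F0 - G) = 0 := by
    intro m
    induction m using Nat.strong_induction_on with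
    | _ m ih =>
      match m with
      | 0 =>
        have c0F : coeff 0 F0 = 1 := by
          rw [F0, seriesComp, coeff_mk, Finset.sum_range_one, pow_zero, mul_one,
            coeff_zero_eq_constantCoeff, constantCoeff_C, aq0]
        have c0G : coeff 0 G = 1 := by
          rw [G, coeff_zero_eq_constantCoeff]
          simp only [map_mul, map_sub, map_one, constantCoeff_X, Emk, constantCoeff_mk]
          rw [ee]
          norm_num [aq0]
        rw [map_sub, c0F, c0G, sub_self]
      | (m+1) =>
        have h := congrArg (coeff (m+1)) hδ
        rw [map_zero, map_add, map_add] at h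
        have hδlow : ∀ j, j < m + 1 → coeff j (F0 - G) = 0 := fun j hj => ih j hj
        have hdlow : ∀ j, j < m → coeff j (d⁄dX ℚ (F0 - G)) = 0 := by
          intro j hj
          rw [coeff_derivative, hδlow (j+1) (by omega), zero_mul]
        have t0 : coeff (m+1) (X^1 * (A0p * (F0 - G))) = 0 := by
          rw [coeffXpow, if_pos (by omega), show m+1-1 = m by omega,
            coeff_mul_single _ _ _ (fun j hj => hδlow j (by omega)), hδlow m (by omega), mul_zero]
        have t1 : coeff (m+1) (X^1 * (A1p * (d⁄dX ℚ (F0 - G))))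
            = coeff (m+1) (F0 - G) * ((m:ℚ)+1) := by
          rw [coeffXpow, if_pos (by omega), show m+1-1 = m by omega,
            coeff_mul_single _ _ _ hdlow, cA1, one_mul, coeff_derivative]
        rcases Nat.eq_zero_or_pos m with hm0 | hmpos
        · subst hm0
          have t2 : coeff 1 ((X:ℚ⟦X⟧)^2 * (A2p * (d⁄dX ℚ (d⁄dX ℚ (F0 - G))))) = 0 := by
            rw [coeffXpow, if_neg (by omega)]
          rw [t2, t1, t0] at h
          push_cast at h
          linear_combination h
        · obtain ⟨n, rfl⟩ : ∃ n, m = n + 1 := ⟨m - 1, by omega⟩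
          have hddlow : ∀ j, j < n → coeff j (d⁄dX ℚ (d⁄dX ℚ (F0 - G))) = 0 := by
            intro j hj
            rw [coeff_derivative, coeff_derivative, hδlow (j+2) (by omega), zero_mul, zero_mul]
          have t2 : coeff (n+1+1) ((X:ℚ⟦X⟧)^2 * (A2p * (d⁄dX ℚ (d⁄dX ℚ (F0 - G)))))
              = coeff (n+1+1) (F0 - G) * ((n:ℚ)+2) * ((n:ℚ)+1) := by
            rw [coeffXpow, if_pos (by omega), show n+1+1-2 = n by omega,
              coeff_mul_single _ _ _ hddlow, cA2, one_mul, coeff_derivative, coeff_derivative]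
            push_cast
            ring
          rw [t2, t1, t0, add_zero] at h
          have hne : ((n:ℚ)+2)*((n:ℚ)+1) + ((n:ℚ)+1+1) ≠ 0 := by positivity
          have hfin : coeff (n+1+1) (F0 - G) * (((n:ℚ)+2)*((n:ℚ)+1) + ((n:ℚ)+1+1)) = 0 := by
            push_cast at h
            linear_combination h
          rcases mul_eq_zero.mp hfin with hc | hc
          · exact hc
          · exact absurd hc hne
  have hsub : F0 - G = 0 := by
    ext m
    rw [hco m, map_zero]
  have := sub_eq_zero.mp hsub
  exact this

end HFE

/-- The functional equation `(1/(1-3x)) · H((x²+x)/(3x-1)) = H(x²)` in `ℚ⟦x⟧`. -/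
theorem H_functional_equation :
    (1 - 3 * PowerSeries.X : PowerSeries ℚ)⁻¹ *
        seriesComp (fun n => (aSeq n : ℚ)) uSeries
      = PowerSeries.mk (fun m => if 2 ∣ m then (aSeq (m / 2) : ℚ) else 0) := by
  have h1 : constantCoeff (1 - 3*X : ℚ⟦X⟧) ≠ 0 := by simp
  have hF : seriesComp (fun n => (aSeq n : ℚ)) uSeries = HFE.G := HFE.F0_eq_G
  rw [hF, HFE.G, ← mul_assoc, PowerSeries.inv_mul_cancel _ h1, one_mul]
  rfl
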